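/- For every P ∈ K⟨n⟩ and every k with 1 ≤ k ≤ n, one has δ_k(C P) = (N + I)(δ_k P), where I is the identity map of K⟨n⟩. -/

import Mathlib

/-! Setup: the free associative algebra `K⟨X_1,…,X_n⟩` realized as the monoid
algebra of the free monoid on `Fin n`, together with the partial cyclic
derivatives `δ_j`, the number operator `N` and the cyclic symmetrization `C`. -/

noncomputable section

/-- `K⟨n⟩`, the ring of polynomials in `n` noncommuting indeterminates. -/
abbrev FreePoly (K : Type) [CommSemiring K] (n : ℕ) : Type :=
  MonoidAlgebra K (FreeMonoid (Fin n))

/-- The monomial `X_{i_1} ⋯ X_{i_p}` associated to the word `w = [i_1,…,i_p]`. -/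
def mono (K : Type) [Field K] {n : ℕ} (w : List (Fin n)) : FreePoly K n :=
  MonoidAlgebra.single (FreeMonoid.ofList w) 1

/-- The indeterminate `X k`. -/
def Xvar (K : Type) [Field K] {n : ℕ} (k : Fin n) : FreePoly K n := mono K [k]

variable {K : Type} [Field K] [CharZero K] {n : ℕ}

/-- The partial cyclic derivative `δ_j = μ̃ ∘ ∂_j`: on a monomial
`X_{i_0} ⋯ X_{i_s}` it gives `∑_{p : i_p = j} X_{i_{p+1}} ⋯ X_{i_s} X_{i_0} ⋯ X_{i_{p-1}}`. -/
def cycDeriv (j : Fin n) : FreePoly K n →ₗ[K] FreePoly K n :=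
  (Finsupp.lsum K fun w => LinearMap.toSpanSingleton K _
    (∑ p : Fin (FreeMonoid.toList w).length,
      if (FreeMonoid.toList w).get p = j then
        mono K ((FreeMonoid.toList w).drop (p + 1) ++ (FreeMonoid.toList w).take p)
      else 0)) ∘ₗ (MonoidAlgebra.coeffLinearEquiv K).toLinearMap

/-- The number operator `N`, multiplying a monomial by its degree. -/
def numOp : FreePoly K n →ₗ[K] FreePoly K n :=
  (Finsupp.lsum K fun w => LinearMap.toSpanSingleton K _
    ((FreeMonoid.toList w).length • mono K (FreeMonoid.toList w))) ∘ₗ (MonoidAlgebra.coeffLinearEquiv K).toLinearMap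

/-- The cyclic symmetrization `C`, sending a monomial of degree `p ≥ 1` to the
sum of its `p` cyclic rotations (and `1` to `0`). -/
def cycSym : FreePoly K n →ₗ[K] FreePoly K n :=
  (Finsupp.lsum K fun w => LinearMap.toSpanSingleton K _
    (∑ p ∈ Finset.range (FreeMonoid.toList w).length,
      mono K ((FreeMonoid.toList w).rotate (p + 1)))) ∘ₗ (MonoidAlgebra.coeffLinearEquiv K).toLinearMap

/-- The value of `δ_k` on the monomial of a word. -/
def myS (k : Fin n) (w : List (Fin n)) : FreePoly K n :=
  ∑ p : Fin w.length,
    if w.get p = k then mono K (w.drop (p + 1) ++ w.take p) else 0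

/-- Auxiliary: the contribution of the last letter of a word. -/
def myf (k : Fin n) (u : List (Fin n)) : FreePoly K n :=
  if u.getLast? = some k then mono K u.dropLast else 0

lemma cycDeriv_mono (k : Fin n) (w : List (Fin n)) :
    cycDeriv k (mono K w) = myS k w := by
  rw [mono, cycDeriv, LinearMap.comp_apply, LinearEquiv.coe_coe,
    MonoidAlgebra.coeffLinearEquiv_apply, MonoidAlgebra.coeff_single]
  erw [Finsupp.lsum_single]
  rw [
    LinearMap.toSpanSingleton_apply, one_smul]
  rfl

lemma numOp_mono (u : List (Fin n)) :
    numOp (mono K u) = u.length • mono K u := by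
  rw [mono, numOp, LinearMap.comp_apply, LinearEquiv.coe_coe,
    MonoidAlgebra.coeffLinearEquiv_apply, MonoidAlgebra.coeff_single]
  erw [Finsupp.lsum_single]
  rw [
    LinearMap.toSpanSingleton_apply, one_smul]
  rfl

lemma cycSym_mono (w : List (Fin n)) :
    cycSym (mono K w) = ∑ p ∈ Finset.range w.length, mono K (w.rotate (p + 1)) := by
  rw [mono, cycSym, LinearMap.comp_apply, LinearEquiv.coe_coe,
    MonoidAlgebra.coeffLinearEquiv_apply, MonoidAlgebra.coeff_single]
  erw [Finsupp.lsum_single]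
  rw [
    LinearMap.toSpanSingleton_apply, one_smul]
  rfl

lemma myS_eq (k : Fin n) (w : List (Fin n)) :
    myS (K := K) k w = ∑ p ∈ Finset.range w.length, myf k (w.rotate (p + 1)) := by
  have h : ∀ p : Fin w.length,
      (if w.get p = k then mono K (w.drop (p + 1) ++ w.take p) else 0)
        = myf k (w.rotate (p.val + 1)) := by
    intro p
    have hrot : w.rotate (p.val + 1)
        = (w.drop (p.val + 1) ++ w.take p.val) ++ [w.get p] := by
      rw [List.rotate_eq_drop_append_take (by omega : p.val + 1 ≤ w.length),
        List.append_assoc]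
      congr 1
      rw [List.get_eq_getElem, List.take_concat_get']
    rw [myf, hrot, List.getLast?_concat, List.dropLast_concat]
    simp only [Option.some.injEq, List.get_eq_getElem]
  rw [myS]
  simp_rw [h]
  exact Fin.sum_univ_eq_sum_range (fun p => myf k (w.rotate (p + 1))) w.length

lemma myS_rotate_one (k : Fin n) (v : List (Fin n)) :
    myS (K := K) k (v.rotate 1) = myS k v := by
  rw [myS_eq, myS_eq, List.length_rotate]
  set g : ℕ → FreePoly K n := fun q => myf k (v.rotate (q + 1)) with hg
  have h1 : ∀ p : ℕ, myf (K := K) k ((v.rotate 1).rotate (p + 1)) = g (p + 1) := by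
    intro p
    rw [hg, List.rotate_rotate]
    ring_nf
  simp_rw [h1]
  have hgL : g v.length = g 0 := by
    rw [hg]
    have h4 : (v.rotate 1).rotate v.length = v.rotate 1 := by
      have := List.rotate_length (v.rotate 1)
      rwa [List.length_rotate] at this
    have : v.rotate (v.length + 1) = v.rotate (0 + 1) := by
      rw [zero_add, add_comm, ← List.rotate_rotate, h4]
    simp only [this]
  have h2 := Finset.sum_range_succ' g v.length
  have h3 := Finset.sum_range_succ g v.length
  rw [h3, hgL] at h2
  exact add_right_cancel h2.symm

lemma myS_rotate (k : Fin n) (v : List (Fin n)) (r : ℕ) :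
    myS (K := K) k (v.rotate r) = myS k v := by
  induction r with
  | zero => rw [List.rotate_zero]
  | succ r ih =>
      rw [← ih, ← myS_rotate_one k (v.rotate r), List.rotate_rotate]

lemma key (w : List (Fin n)) (k : Fin n) :
    cycDeriv k (cycSym (mono K w))
      = numOp (cycDeriv k (mono K w)) + cycDeriv k (mono K w) := by
  rw [cycSym_mono, map_sum]
  simp_rw [cycDeriv_mono, myS_rotate]
  rw [Finset.sum_const, Finset.card_range]
  rw [myS, map_sum, Finset.smul_sum, ← Finset.sum_add_distrib]
  apply Finset.sum_congr rfl
  intro p _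
  simp only [List.get_eq_getElem] at *
  by_cases h : w[p.val] = k
  · simp only [h, if_true]
    rw [numOp_mono]
    have hlen : (w.drop (p.val + 1) ++ w.take p.val).length = w.length - 1 := by
      have := p.isLt
      simp only [List.length_append, List.length_drop, List.length_take]
      omega
    rw [hlen, ← succ_nsmul]
    congr 1
    have := p.isLt
    omega
  · simp [h]

theorem cycDeriv_cycSym (P : FreePoly K n) (k : Fin n) :
    cycDeriv k (cycSym P) = numOp (cycDeriv k P) + cycDeriv k P := by
  induction P using MonoidAlgebra.induction_linear with
  | zero => simp
  | add f g hf hg =>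
      simp only [map_add, hf, hg]
      abel
  | single a b =>
      have hs : (MonoidAlgebra.single a b : FreePoly K n) = b • mono K (FreeMonoid.toList a) := by
        rw [mono, FreeMonoid.ofList_toList, MonoidAlgebra.smul_single', mul_one]
      rw [hs]
      simp only [map_smul]
      rw [key, smul_add]
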